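/- Let ϱ : [0,π] → ℝ be continuous and set ϱ₀ := min_{ξ∈[0,π]} ϱ(ξ). Let a₁, b₁, a₂, b₂ ≥ 0 with a₁² + b₁² > 0, a₂² + b₂² > 0, and additionally a₁² + a₂² > 0. Suppose μ ∈ ℝ and φ : [0,π] → ℝ is twice continuously differentiable, not identically zero, satisfies φ''(ξ) + (μ − ϱ(ξ))φ(ξ) = 0 for all ξ ∈ [0,π], and satisfies a₁φ(0) − b₁φ'(0) = 0 and a₂φ(π) + b₂φ'(π) = 0. Then μ > ϱ₀ (the inequality is strict). -/

import Mathlib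

/-- Lemma 6.2 (strict inequality): if moreover `a₁² + a₂² > 0`, then `μ > ϱ₀`. -/
theorem stmt_1
    (ϱ : ℝ → ℝ) (hϱ : ContinuousOn ϱ (Set.Icc 0 Real.pi))
    (ϱ₀ : ℝ) (hϱ₀ : IsLeast (ϱ '' Set.Icc 0 Real.pi) ϱ₀)
    (a₁ b₁ a₂ b₂ : ℝ) (ha₁ : 0 ≤ a₁) (hb₁ : 0 ≤ b₁) (ha₂ : 0 ≤ a₂) (hb₂ : 0 ≤ b₂)
    (h1 : 0 < a₁ ^ 2 + b₁ ^ 2) (h2 : 0 < a₂ ^ 2 + b₂ ^ 2)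
    (h3 : 0 < a₁ ^ 2 + a₂ ^ 2)
    (μ : ℝ) (φ : ℝ → ℝ) (hφ : ContDiff ℝ 2 φ)
    (hne : ∃ ξ ∈ Set.Icc 0 Real.pi, φ ξ ≠ 0)
    (hode : ∀ ξ ∈ Set.Icc 0 Real.pi, deriv (deriv φ) ξ + (μ - ϱ ξ) * φ ξ = 0)
    (hbc0 : a₁ * φ 0 - b₁ * deriv φ 0 = 0)
    (hbcπ : a₂ * φ Real.pi + b₂ * deriv φ Real.pi = 0) :
    ϱ₀ < μ := by
  by_contra hlt
  push_neg at hlt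
  have hπ : (0:ℝ) < Real.pi := Real.pi_pos
  have hμle : ∀ ξ ∈ Set.Icc 0 Real.pi, μ ≤ ϱ ξ := fun ξ hξ =>
    hlt.trans (hϱ₀.2 ⟨ξ, hξ, rfl⟩)
  have hdφ : Differentiable ℝ φ := hφ.differentiable (by norm_num)
  have hφ' : ContDiff ℝ 1 (deriv φ) :=
    (contDiff_succ_iff_deriv.mp (show ContDiff ℝ (1 + 1) φ by norm_num; exact_mod_cast hφ)).2.2
  have hdφ' : Differentiable ℝ (deriv φ) := hφ'.differentiable (by norm_num)
  set g : ℝ → ℝ := fun ξ => φ ξ * deriv φ ξ with hg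
  have hgd : ∀ ξ, deriv g ξ = deriv φ ξ * deriv φ ξ + φ ξ * deriv (deriv φ) ξ := by
    intro ξ
    rw [hg, deriv_fun_mul (hdφ ξ) (hdφ' ξ)]
  have hgd' : ∀ ξ ∈ Set.Icc 0 Real.pi,
      deriv g ξ = deriv φ ξ ^ 2 + (ϱ ξ - μ) * φ ξ ^ 2 := by
    intro ξ hξ
    have h := hode ξ hξ
    rw [hgd ξ]
    linear_combination φ ξ * h
  have hgnn : ∀ ξ ∈ interior (Set.Icc (0:ℝ) Real.pi), 0 ≤ deriv g ξ := by
    intro ξ hξ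
    rw [interior_Icc] at hξ
    have hξ' : ξ ∈ Set.Icc 0 Real.pi := Set.mem_Icc_of_Ioo hξ
    rw [hgd' ξ hξ']
    have := hμle ξ hξ'
    nlinarith [sq_nonneg (deriv φ ξ), sq_nonneg (φ ξ)]
  have hgc : Continuous g := (hdφ.continuous.mul hdφ'.continuous)
  have hgdiff : Differentiable ℝ g := hdφ.mul hdφ'
  have hgmono : MonotoneOn g (Set.Icc 0 Real.pi) :=
    monotoneOn_of_deriv_nonneg (convex_Icc _ _) hgc.continuousOn
      (hgdiff.differentiableOn) hgnn
  have hg0 : 0 ≤ g 0 := by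
    rcases eq_or_lt_of_le hb₁ with hb | hb
    · have ha : a₁ ≠ 0 := by nlinarith
      have hm : a₁ * φ 0 = 0 := by rw [← hb] at hbc0; linarith
      have : φ 0 = 0 := (mul_eq_zero.mp hm).resolve_left ha
      simp [hg, this]
    · have h0 : b₁ * deriv φ 0 = a₁ * φ 0 := by linarith
      have : g 0 * b₁ = a₁ * φ 0 ^ 2 := by
        simp only [hg]; linear_combination φ 0 * h0
      nlinarith [sq_nonneg (φ 0)]
  have hgπ : g Real.pi ≤ 0 := by
    rcases eq_or_lt_of_le hb₂ with hb | hb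
    · have ha : a₂ ≠ 0 := by nlinarith
      have hm : a₂ * φ Real.pi = 0 := by rw [← hb] at hbcπ; linarith
      have : φ Real.pi = 0 := (mul_eq_zero.mp hm).resolve_left ha
      simp [hg, this]
    · have h0 : b₂ * deriv φ Real.pi = -(a₂ * φ Real.pi) := by linarith
      have : g Real.pi * b₂ = -(a₂ * φ Real.pi ^ 2) := by
        simp only [hg]; linear_combination φ Real.pi * h0
      nlinarith [sq_nonneg (φ Real.pi)]
  have hgzero : ∀ ξ ∈ Set.Icc (0:ℝ) Real.pi, g ξ = 0 := by
    intro ξ hξ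
    have h1' : g 0 ≤ g ξ := hgmono (Set.left_mem_Icc.mpr hπ.le) hξ hξ.1
    have h2' : g ξ ≤ g Real.pi := hgmono hξ (Set.right_mem_Icc.mpr hπ.le) hξ.2
    linarith
  have hderiv0 : ∀ ξ ∈ Set.Ioo (0:ℝ) Real.pi, deriv φ ξ = 0 := by
    intro ξ hξ
    have hev : g =ᶠ[nhds ξ] fun _ => (0:ℝ) := by
      filter_upwards [Ioo_mem_nhds hξ.1 hξ.2] with y hy
      exact hgzero y (Set.mem_Icc_of_Ioo hy)
    have hdg0 : deriv g ξ = 0 := by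
      rw [hev.deriv_eq, deriv_const]
    have hξ' : ξ ∈ Set.Icc 0 Real.pi := Set.mem_Icc_of_Ioo hξ
    have := hgd' ξ hξ'
    have hμ := hμle ξ hξ'
    nlinarith [sq_nonneg (deriv φ ξ), sq_nonneg (φ ξ)]
  have hconst : ∀ ξ ∈ Set.Icc (0:ℝ) Real.pi, φ ξ = φ 0 := by
    have hmono : MonotoneOn φ (Set.Icc 0 Real.pi) :=
      monotoneOn_of_deriv_nonneg (convex_Icc _ _) hdφ.continuous.continuousOn
        hdφ.differentiableOn (by
          intro x hx; rw [interior_Icc] at hx; rw [hderiv0 x hx])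
    have hanti : AntitoneOn φ (Set.Icc 0 Real.pi) :=
      antitoneOn_of_deriv_nonpos (convex_Icc _ _) hdφ.continuous.continuousOn
        hdφ.differentiableOn (by
          intro x hx; rw [interior_Icc] at hx; rw [hderiv0 x hx])
    intro ξ hξ
    have h0m : (0:ℝ) ∈ Set.Icc (0:ℝ) Real.pi := Set.left_mem_Icc.mpr hπ.le
    exact le_antisymm (hanti h0m hξ hξ.1) (hmono h0m hξ hξ.1)
  obtain ⟨ξ, hξ, hφξ⟩ := hne
  have hc : φ 0 ≠ 0 := by rw [← hconst ξ hξ]; exact hφξ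
  have hcπ : φ Real.pi = φ 0 := hconst Real.pi ⟨hπ.le, le_rfl⟩
  -- g 0 = 0 and g π = 0 give deriv φ 0 = 0 and deriv φ π = 0
  have hd0 : deriv φ 0 = 0 := by
    have := hgzero 0 (Set.left_mem_Icc.mpr hπ.le)
    simp only [hg] at this
    exact (mul_eq_zero.mp this).resolve_left hc
  have hdπ : deriv φ Real.pi = 0 := by
    have := hgzero Real.pi (Set.right_mem_Icc.mpr hπ.le)
    simp only [hg] at this
    rcases mul_eq_zero.mp this with h | h
    · exact absurd (hcπ ▸ h) hc
    · exact h
  have ha1 : a₁ * φ 0 = 0 := by rw [hd0] at hbc0; linarith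
  have ha2 : a₂ * φ 0 = 0 := by rw [hdπ, hcπ] at hbcπ; linarith
  have ha1' : a₁ = 0 := by
    rcases mul_eq_zero.mp ha1 with h | h
    · exact h
    · exact absurd h hc
  have ha2' : a₂ = 0 := by
    rcases mul_eq_zero.mp ha2 with h | h
    · exact h
    · exact absurd h hc
  rw [ha1', ha2'] at h3
  norm_num at h3
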